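/- arXiv:2601.03126 — 4 statements merged into one kernel-verified Lean document; each statement's English description precedes it below -/
import Mathlib

section
/- Let A be a finite abelian group. Then there exists at least one symmetric duality of A, i.e., a group isomorphism φ : A → Â satisfying φ(a)(b) = φ(b)(a) for all a, b ∈ A. -/
/-- A duality of a finite abelian group `A`: a group isomorphism from `A` to its
character group `Â = AddChar A ℂˣ`, encoded as a bijective map respecting the operations. -/
def IsDuality {A : Type*} [AddCommGroup A] (φ : A → AddChar A ℂˣ) : Prop :=
  Function.Bijective φ ∧ ∀ a b : A, φ (a + b) = φ a * φ b

private lemma zmod_comm {n : ℕ} [NeZero n] (x y : ZMod n) :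
    AddChar.zmod n x y = AddChar.zmod n y x := by
  obtain ⟨x, rfl⟩ := ZMod.intCast_surjective x
  obtain ⟨y, rfl⟩ := ZMod.intCast_surjective y
  simp [mul_comm]

private lemma toUnits_injective : Function.Injective Circle.toUnits := by
  intro x y h
  have := congrArg Units.val h
  exact Circle.ext (by simpa using this)

/-- Every finite abelian group admits at least one symmetric duality. -/
theorem exists_symmetric_duality (A : Type*) [AddCommGroup A] [Fintype A] :
    ∃ φ : A → AddChar A ℂˣ, IsDuality φ ∧ ∀ a b : A, φ a b = φ b a := by
  classical
  obtain ⟨ι, _, n, hn, ⟨e⟩⟩ := AddCommGroup.equiv_directSum_zmod_of_finite' A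
  have hn' : ∀ i, NeZero (n i) := fun i => ⟨by have := hn i; omega⟩
  set φ : A → AddChar A ℂˣ := fun a =>
    { toFun := fun b => ∏ i, Circle.toUnits (AddChar.zmod (n i) (e a i) (e b i))
      map_zero_eq_one' := by simp
      map_add_eq_mul' := fun b c => by
        simp [map_add, AddChar.map_add_eq_mul, Finset.prod_mul_distrib] } with hφ
  have hφ_apply : ∀ a b, φ a b = ∏ i, Circle.toUnits (AddChar.zmod (n i) (e a i) (e b i)) :=
    fun a b => rfl
  have hadd : ∀ a b : A, φ (a + b) = φ a * φ b := by
    intro a b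
    refine DFunLike.ext _ _ fun c => ?_
    show φ (a + b) c = φ a c * φ b c
    rw [hφ_apply, hφ_apply, hφ_apply, ← Finset.prod_mul_distrib]
    refine Finset.prod_congr rfl fun i _ => ?_
    rw [map_add, DirectSum.add_apply, AddChar.zmod_add, AddChar.mul_apply, map_mul]
  have key : ∀ (a : A) (i : ι) (l : ZMod (n i)),
      φ a (e.symm (DirectSum.of (fun j => ZMod (n j)) i l)) =
        Circle.toUnits (AddChar.zmod (n i) (e a i) l) := by
    intro a i l
    rw [hφ_apply]
    rw [Finset.prod_eq_single i]
    · rw [e.apply_symm_apply, DirectSum.of_eq_same]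
    · intro j _ hj
      rw [e.apply_symm_apply, DirectSum.of_eq_of_ne _ _ _ hj]
      simp
    · simp
  have hker : ∀ a : A, φ a = 1 → a = 0 := by
    intro a ha
    have h1 : ∀ (i : ι) (l : ZMod (n i)), AddChar.zmod (n i) (e a i) l = 1 := by
      intro i l
      refine toUnits_injective ?_
      rw [← key a i l, ha]
      simp
    have h2 : ∀ i, e a i = 0 := by
      intro i
      refine AddChar.zmod_injective ?_
      refine DFunLike.ext _ _ fun l => ?_
      rw [h1 i l]
      simp
    have : e a = 0 := DFunLike.ext _ _ fun i => by rw [h2 i]; rfl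
    have := congrArg e.symm this
    simpa using this
  have hinj : Function.Injective φ := by
    intro a b h
    have h1 : φ (a - b) * φ b = φ b := by rw [← hadd, sub_add_cancel, h]
    have h2 : a - b = 0 := hker _ (DFunLike.ext _ _ fun c => by
      have := DFunLike.congr_fun h1 c; rw [AddChar.mul_apply] at this; simpa using this)
    exact sub_eq_zero.mp h2
  haveI hfin : Finite (AddChar A ℂˣ) :=
    Finite.of_injective _ ((Units.coeHom ℂ).compAddChar_injective_right (fun _ _ h => Units.ext h))
  have hcard : Nat.card A = Nat.card (AddChar A ℂˣ) := by
    refine le_antisymm (Nat.card_le_card_of_injective φ hinj) ?_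
    calc Nat.card (AddChar A ℂˣ)
        ≤ Nat.card (AddChar A ℂ) :=
          Nat.card_le_card_of_injective _ ((Units.coeHom ℂ).compAddChar_injective_right (fun _ _ h => Units.ext h))
      _ = Nat.card A := by
          rw [Nat.card_eq_fintype_card, Nat.card_eq_fintype_card, AddChar.card_eq]
  refine ⟨φ, ⟨(Nat.bijective_iff_injective_and_card φ).2 ⟨hinj, hcard⟩, hadd⟩, ?_⟩
  intro a b
  rw [hφ_apply, hφ_apply]
  exact Finset.prod_congr rfl fun i _ => congrArg _ (zmod_comm _ _)
end

section
/- Let A be a finite abelian group, φ a duality of A extended coordinatewise to Aⁿ, and C ⊆ Aⁿ an additive code. Then C ⊆ 𝔏_φ(C) if and only if C ⊆ ℜ_φ(C) (left self-orthogonal iff right self-orthogonal), and C = 𝔏_φ(C) if and only if C = ℜ_φ(C) (left self-dual iff right self-dual). -/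
/-- The left dual of a set `S ⊆ Aⁿ` with respect to the coordinatewise extension of `φ`. -/
def lDual {A : Type*} [AddCommGroup A] {n : ℕ} (φ : A → AddChar A ℂˣ)
    (S : Set (Fin n → A)) : Set (Fin n → A) :=
  {x | ∀ c ∈ S, (∏ i, φ (x i) (c i)) = 1}

/-- The right dual of a set `S ⊆ Aⁿ` with respect to the coordinatewise extension of `φ`. -/
def rDual {A : Type*} [AddCommGroup A] {n : ℕ} (φ : A → AddChar A ℂˣ)
    (S : Set (Fin n → A)) : Set (Fin n → A) :=
  {x | ∀ c ∈ S, (∏ i, φ (c i) (x i)) = 1}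

/-- Lift a `ℂ`-valued additive character of an additive group to a `ℂˣ`-valued one. -/
noncomputable def AddChar.toUnitsChar {A : Type*} [AddCommGroup A] (ψ : AddChar A ℂ) :
    AddChar A ℂˣ where
  toFun a := (ψ.val_isUnit a).unit
  map_zero_eq_one' := Units.ext <| by simp
  map_add_eq_mul' a b := Units.ext <| by simp [ψ.map_add_eq_mul]

/-- `ℂˣ`-valued characters of a finite abelian group separate points. -/
lemma eq_zero_of_forall_addChar_eq_one {A : Type*} [AddCommGroup A] [Finite A] {a : A}
    (h : ∀ χ : AddChar A ℂˣ, χ a = 1) : a = 0 := by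
  by_contra ha
  obtain ⟨ψ, hψ⟩ := AddChar.exists_apply_ne_zero.2 ha
  have := h ψ.toUnitsChar
  apply hψ
  have : ((ψ.toUnitsChar a : ℂˣ) : ℂ) = ((1 : ℂˣ) : ℂ) := by rw [this]
  simpa [AddChar.toUnitsChar] using this

/-- An additive code is left self-orthogonal iff it is right self-orthogonal, and
left self-dual iff right self-dual. -/
theorem self_orthogonal_and_self_dual_left_iff_right {A : Type*} [AddCommGroup A] [Fintype A]
    {n : ℕ} (φ : A → AddChar A ℂˣ) (hφ : IsDuality φ) (C : AddSubgroup (Fin n → A)) :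
    ((C : Set (Fin n → A)) ⊆ lDual φ (C : Set (Fin n → A)) ↔
      (C : Set (Fin n → A)) ⊆ rDual φ (C : Set (Fin n → A))) ∧
    ((C : Set (Fin n → A)) = lDual φ (C : Set (Fin n → A)) ↔
      (C : Set (Fin n → A)) = rDual φ (C : Set (Fin n → A))) := by
  classical
  obtain ⟨hbij, hadd⟩ := hφ
  -- part 1
  have part1 : ((C : Set (Fin n → A)) ⊆ lDual φ (C : Set (Fin n → A)) ↔
      (C : Set (Fin n → A)) ⊆ rDual φ (C : Set (Fin n → A))) :=
    ⟨fun h x hx c hc => h hc x hx, fun h x hx c hc => h hc x hx⟩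
  refine ⟨part1, ?_⟩
  -- the adjoint character: for each `a`, `b ↦ φ b a` is a character
  have hφ0 : φ 0 = 1 := by
    have h := hadd 0 0
    rw [add_zero] at h
    refine AddChar.ext _ _ fun b => ?_
    have h2 := congrArg (fun χ : AddChar A ℂˣ => χ b) h
    simp only [AddChar.mul_apply] at h2
    rw [AddChar.one_apply]
    exact (left_eq_mul.1 h2)
  set adj : A → AddChar A ℂˣ := fun a =>
    { toFun := fun b => φ b a
      map_zero_eq_one' := by show φ 0 a = 1; rw [hφ0]; rfl
      map_add_eq_mul' := fun b b' => by show φ (b+b') a = φ b a * φ b' a; rw [hadd]; rfl } with hadj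
  have hadj_apply : ∀ a b : A, adj a b = φ b a := fun _ _ => rfl
  set e := Equiv.ofBijective φ hbij with he
  set σ : A → A := fun a => e.symm (adj a) with hσ
  have hσ_spec : ∀ a b : A, φ (σ a) b = φ b a := by
    intro a b
    have : φ (σ a) = adj a := e.apply_symm_apply (adj a)
    rw [this, hadj_apply]
  -- σ is injective, hence bijective
  have hσ_inj : Function.Injective σ := by
    intro a a' h
    have h2 : ∀ b : A, φ b a = φ b a' := by
      intro b
      rw [← hσ_spec a b, ← hσ_spec a' b, h]
    have h3 : ∀ χ : AddChar A ℂˣ, χ (a - a') = 1 := by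
      intro χ
      obtain ⟨b, rfl⟩ := hbij.2 χ
      rw [sub_eq_add_neg, AddChar.map_add_eq_mul, AddChar.map_neg_eq_inv, h2 b,
        mul_inv_cancel]
    have := eq_zero_of_forall_addChar_eq_one h3
    exact sub_eq_zero.1 this
  have hσ_bij : Function.Bijective σ := Finite.injective_iff_bijective.1 hσ_inj
  -- the coordinatewise map τ
  set τ : (Fin n → A) → (Fin n → A) := fun x => σ ∘ x with hτ
  have hτ_inj : Function.Injective τ := fun x y h =>
    funext fun i => hσ_inj (congr_fun h i)
  have hτ_bij : Function.Bijective τ := Finite.injective_iff_bijective.1 hτ_inj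
  -- rDual = τ ⁻¹' lDual
  have hkey : rDual φ (C : Set (Fin n → A)) = τ ⁻¹' (lDual φ (C : Set (Fin n → A))) := by
    ext x
    simp only [rDual, lDual, Set.mem_setOf_eq, Set.mem_preimage]
    constructor
    · intro h c hc
      calc ∏ i, φ (τ x i) (c i) = ∏ i, φ (c i) (x i) := by
            apply Finset.prod_congr rfl
            intro i _
            exact hσ_spec (x i) (c i)
        _ = 1 := h c hc
    · intro h c hc
      calc ∏ i, φ (c i) (x i) = ∏ i, φ (τ x i) (c i) := by
            apply Finset.prod_congr rfl
            intro i _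
            exact (hσ_spec (x i) (c i)).symm
        _ = 1 := h c hc
  -- cardinalities
  have hcard : (rDual φ (C : Set (Fin n → A))).ncard = (lDual φ (C : Set (Fin n → A))).ncard := by
    rw [hkey]
    have : τ ⁻¹' (lDual φ (C : Set (Fin n → A))) =
        (Equiv.ofBijective τ hτ_bij).symm '' (lDual φ (C : Set (Fin n → A))) := by
      rw [Equiv.image_eq_preimage_symm, Equiv.symm_symm]
      rfl
    rw [this, Set.ncard_image_of_injective _ (Equiv.ofBijective τ hτ_bij).symm.injective]
  constructor
  · intro hL
    have hsub : (C : Set (Fin n → A)) ⊆ rDual φ (C : Set (Fin n → A)) :=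
      part1.1 hL.subset
    apply Set.eq_of_subset_of_ncard_le hsub _ (Set.toFinite _)
    rw [hcard, ← hL]
  · intro hR
    have hsub : (C : Set (Fin n → A)) ⊆ lDual φ (C : Set (Fin n → A)) :=
      part1.2 hR.subset
    apply Set.eq_of_subset_of_ncard_le hsub _ (Set.toFinite _)
    rw [← hcard, ← hR]
end

section
/- (Poisson summation formula) Let A be a finite abelian group, H ⊆ A a subgroup, V a complex vector space, and f : A → V any function. Let f̂ : Â → V denote the Fourier transform f̂(π) = ∑_{a ∈ A} π(a) • f(a) (the sum over all a ∈ A of the scalar π(a) ∈ ℂˣ acting on f(a)). Then ∑_{h ∈ H} f(h) = (|H| / |A|) • ∑_{π ∈ (Â : H)} f̂(π), where the second sum runs over the annihilator (Â : H). -/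
/-- The Fourier transform of a function `f : A → V`, evaluated at a character `π`:
`f̂(π) = ∑_{a ∈ A} π(a) • f(a)`. -/
noncomputable def fourierTransform {A : Type*} [AddCommGroup A] [Fintype A]
    {V : Type*} [AddCommGroup V] [Module ℂ V] (f : A → V) (π : AddChar A ℂˣ) : V :=
  ∑ a : A, ((π a : ℂ) • f a)

open Finset

/-- Units-valued characters are the same as `ℂ`-valued characters. -/
noncomputable def addCharUnitsEquiv (A : Type*) [AddCommGroup A] :
    AddChar A ℂˣ ≃ AddChar A ℂ where
  toFun ψ := (Units.coeHom ℂ).compAddChar ψ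
  invFun χ := AddChar.toMonoidHomEquiv.symm χ.toMonoidHom.toHomUnits
  left_inv ψ := by ext a; rfl
  right_inv χ := by ext a; rfl

@[simp] lemma addCharUnitsEquiv_apply {A : Type*} [AddCommGroup A] (ψ : AddChar A ℂˣ) (a : A) :
    addCharUnitsEquiv A ψ a = (ψ a : ℂ) := rfl

@[simp] lemma addCharUnitsEquiv_symm_apply {A : Type*} [AddCommGroup A] (χ : AddChar A ℂ) (a : A) :
    ((addCharUnitsEquiv A).symm χ a : ℂ) = χ a := rfl

/-- Descend a character trivial on `H` to the quotient. -/
noncomputable def quotChar {A : Type*} [AddCommGroup A] (H : AddSubgroup A)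
    (π : AddChar A ℂ) (hπ : ∀ h ∈ H, π h = 1) : AddChar (A ⧸ H) ℂ where
  toFun := fun q => Quotient.liftOn' q (⇑π) (fun a b hab => by
    rw [QuotientAddGroup.leftRel_apply] at hab
    have h1 : π b = π a * π (-a + b) := by
      rw [← AddChar.map_add_eq_mul]; congr 1; abel
    rw [h1, hπ _ hab, mul_one])
  map_zero_eq_one' := π.map_zero_eq_one
  map_add_eq_mul' := by
    intro a b
    refine QuotientAddGroup.induction_on a fun x => ?_
    refine QuotientAddGroup.induction_on b fun y => ?_
    exact π.map_add_eq_mul x y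

@[simp] lemma quotChar_mk {A : Type*} [AddCommGroup A] (H : AddSubgroup A)
    (π : AddChar A ℂ) (hπ) (a : A) : quotChar H π hπ (QuotientAddGroup.mk a) = π a := rfl

lemma sum_annihilator {A : Type*} [AddCommGroup A] [Fintype A] [Fintype (AddChar A ℂˣ)]
    (H : AddSubgroup A) (a : A) [DecidablePred fun π : AddChar A ℂˣ => ∀ h ∈ H, π h = 1]
    [Decidable (a ∈ H)] :
    ∑ π ∈ Finset.univ.filter (fun π : AddChar A ℂˣ => ∀ h ∈ H, π h = 1), ((π a : ℂ)) =
      if a ∈ H then (Nat.card (A ⧸ H) : ℂ) else 0 := by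
  classical
  haveI : Fintype (A ⧸ H) := Fintype.ofFinite _
  have key : ∑ π ∈ Finset.univ.filter (fun π : AddChar A ℂˣ => ∀ h ∈ H, π h = 1), ((π a : ℂ))
      = ∑ χ : AddChar (A ⧸ H) ℂ, χ (QuotientAddGroup.mk a) := by
    refine Finset.sum_bij'
      (fun π (hπ : π ∈ _) => quotChar H (addCharUnitsEquiv A π)
        (fun h hh => by
          have := (Finset.mem_filter.1 hπ).2 h hh
          simp only [addCharUnitsEquiv_apply, this, Units.val_one]))
      (fun χ _ => (addCharUnitsEquiv A).symm (χ.compAddMonoidHom (QuotientAddGroup.mk' H)))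
      (fun π hπ => Finset.mem_univ _)
      (fun χ hχ => ?_) (fun π hπ => ?_) (fun χ hχ => ?_) (fun π hπ => ?_)
    · refine Finset.mem_filter.2 ⟨Finset.mem_univ _, fun h hh => ?_⟩
      ext
      rw [addCharUnitsEquiv_symm_apply]
      simp only [AddChar.compAddMonoidHom_apply, QuotientAddGroup.mk'_apply, Units.val_one]
      rw [show (QuotientAddGroup.mk h : A ⧸ H) = 0 from (QuotientAddGroup.eq_zero_iff h).2 hh]
      exact AddChar.map_zero_eq_one _
    · ext b
      rw [addCharUnitsEquiv_symm_apply]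
      simp
    · ext q
      refine QuotientAddGroup.induction_on q fun x => ?_
      rw [quotChar_mk, Equiv.apply_symm_apply]
      rfl
    · rfl
  rw [key, AddChar.sum_apply_eq_ite, Nat.card_eq_fintype_card]
  simp [QuotientAddGroup.eq_zero_iff]

/-- Poisson summation formula: the sum of `f` over a subgroup `H ⊆ A` equals
`(|H|/|A|)` times the sum of the Fourier transform `f̂` over the annihilator `(Â : H)`. -/
theorem poisson_summation {A : Type*} [AddCommGroup A] [Fintype A]
    {V : Type*} [AddCommGroup V] [Module ℂ V] (H : AddSubgroup A) (f : A → V) :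
    ∑ᶠ h ∈ (H : Set A), f h =
      ((Nat.card H : ℂ) / (Nat.card A : ℂ)) •
        ∑ᶠ π ∈ {π : AddChar A ℂˣ | ∀ h ∈ H, π h = 1}, fourierTransform f π := by
  classical
  haveI : Fintype (AddChar A ℂˣ) := Fintype.ofEquiv _ (addCharUnitsEquiv A).symm
  haveI : Fintype (A ⧸ H) := Fintype.ofFinite _
  have hcard : (Nat.card A : ℂ) = (Nat.card (A ⧸ H) : ℂ) * (Nat.card H : ℂ) := by
    exact_mod_cast congrArg (Nat.cast : ℕ → ℂ)
      (AddSubgroup.card_eq_card_quotient_mul_card_addSubgroup H)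
  have hH : (Nat.card H : ℂ) ≠ 0 := Nat.cast_ne_zero.2 Nat.card_pos.ne'
  have hQ : (Nat.card (A ⧸ H) : ℂ) ≠ 0 := Nat.cast_ne_zero.2 Nat.card_pos.ne'
  rw [← Set.coe_toFinset (H : Set A), finsum_mem_coe_finset,
      ← Set.coe_toFinset {π : AddChar A ℂˣ | ∀ h ∈ H, π h = 1}, finsum_mem_coe_finset]
  have hset : ({π : AddChar A ℂˣ | ∀ h ∈ H, π h = 1} : Set _).toFinset
      = Finset.univ.filter (fun π : AddChar A ℂˣ => ∀ h ∈ H, π h = 1) := by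
    ext π; simp
  have hset2 : ((H : Set A)).toFinset = Finset.univ.filter (fun a => a ∈ H) := by
    ext x; simp
  rw [hset, hset2]
  have main : ∑ π ∈ Finset.univ.filter (fun π : AddChar A ℂˣ => ∀ h ∈ H, π h = 1),
        fourierTransform f π
      = ∑ a ∈ Finset.univ.filter (fun a => a ∈ H), (Nat.card (A ⧸ H) : ℂ) • f a := by
    simp only [fourierTransform]
    rw [Finset.sum_comm]
    calc ∑ a : A, ∑ π ∈ Finset.univ.filter (fun π : AddChar A ℂˣ => ∀ h ∈ H, π h = 1),
          (π a : ℂ) • f a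
        = ∑ a : A, (∑ π ∈ Finset.univ.filter (fun π : AddChar A ℂˣ => ∀ h ∈ H, π h = 1),
          (π a : ℂ)) • f a := by
          simp only [Finset.sum_smul]
      _ = ∑ a : A, (if a ∈ H then (Nat.card (A ⧸ H) : ℂ) else 0) • f a := by
          refine Finset.sum_congr rfl fun a _ => ?_
          rw [sum_annihilator H a]
      _ = _ := by
          rw [Finset.sum_filter]
          simp only [ite_smul, zero_smul]
  rw [main, Finset.smul_sum]
  refine Finset.sum_congr rfl fun x hx => ?_
  rw [smul_smul]
  have h1 : (Nat.card H : ℂ) / (Nat.card A : ℂ) * (Nat.card (A ⧸ H) : ℂ) = 1 := by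
    rw [hcard]; field_simp
  rw [h1, one_smul]
end

section
/- Let R be a finite ring, not necessarily having a multiplicative identity (a finite non-unital ring). Suppose there exists a character χ of the additive group of R (a group homomorphism χ : R → ℂˣ) such that the map R → R̂ sending r to the character s ↦ χ(rs) is bijective. Then R has a multiplicative identity: there exists e ∈ R with e * r = r and r * e = r for all r ∈ R. The same conclusion holds if instead the map r ↦ (s ↦ χ(sr)) is bijective. -/
/-- Characters into `ℂˣ` separate points of a finite abelian group. -/
lemma aux_sep {R : Type*} [AddCommGroup R] [Finite R] {a : R}
    (h : ∀ ψ : AddChar R ℂˣ, ψ a = 1) : a = 0 := by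
  rw [← AddChar.forall_apply_eq_zero (α := R) (a := a)]
  intro ψ
  have : (((AddChar.toMonoidHomEquiv.symm ψ.toMonoidHom.toHomUnits : AddChar R ℂˣ) a : ℂˣ) : ℂ)
      = ψ a := rfl
  rw [← this, h _, Units.val_one]

/-- If a finite (possibly non-unital) ring `R` has an additive character `χ` such that
`r ↦ (s ↦ χ(rs))` (or `r ↦ (s ↦ χ(sr))`) is a bijection from `R` to the character group
of `(R,+)`, then `R` has a multiplicative identity. -/
theorem generating_character_gives_identity {R : Type*} [NonUnitalRing R] [Finite R]
    (χ : AddChar R ℂˣ)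
    (h : Function.Bijective
          (fun r : R => χ.compAddMonoidHom (AddMonoidHom.mulLeft r)) ∨
         Function.Bijective
          (fun r : R => χ.compAddMonoidHom (AddMonoidHom.mulRight r))) :
    ∃ e : R, ∀ r : R, e * r = r ∧ r * e = r := by
  set Φ : R → AddChar R ℂˣ := fun r => χ.compAddMonoidHom (AddMonoidHom.mulLeft r) with hΦ
  set Ψ : R → AddChar R ℂˣ := fun r => χ.compAddMonoidHom (AddMonoidHom.mulRight r) with hΨ
  have hΦapp : ∀ r s, Φ r s = χ (r * s) := fun _ _ => rfl
  have hΨapp : ∀ r s, Ψ r s = χ (s * r) := fun _ _ => rfl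
  have hΦsub : ∀ a b s, Φ (a - b) s = Φ a s / Φ b s := fun a b s => by
    rw [hΦapp, hΦapp, hΦapp, sub_mul, AddChar.map_sub_eq_div]
  have hΨsub : ∀ a b s, Ψ (a - b) s = Ψ a s / Ψ b s := fun a b s => by
    rw [hΨapp, hΨapp, hΨapp, mul_sub, AddChar.map_sub_eq_div]
  -- from both bijective, conclude
  have main : Function.Bijective Φ → Function.Bijective Ψ →
      ∃ e : R, ∀ r : R, e * r = r ∧ r * e = r := by
    intro hΦb hΨb
    obtain ⟨e, he⟩ := hΦb.2 χ
    obtain ⟨f, hf⟩ := hΨb.2 χ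
    have heχ : ∀ s, χ (e * s) = χ s := fun s => by
      rw [← hΦapp]; exact DFunLike.congr_fun he s
    have hfχ : ∀ s, χ (s * f) = χ s := fun s => by
      rw [← hΨapp]; exact DFunLike.congr_fun hf s
    have hel : ∀ r, e * r = r := by
      intro r
      apply hΦb.1
      ext s
      rw [hΦapp, hΦapp, mul_assoc, heχ]
    have hfr : ∀ r, r * f = r := by
      intro r
      apply hΨb.1
      ext s
      rw [hΨapp, hΨapp, ← mul_assoc, hfχ]
    have hef : e = f := by rw [← hfr e, hel f]
    exact ⟨e, fun r => ⟨hel r, by rw [hef, hfr r]⟩⟩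
  -- injectivity transfer across the pairing
  have inj_of_surj : ∀ (A B : R → AddChar R ℂˣ),
      (∀ r s, A r s = B s r) → (∀ a b s, B (a - b) s = B a s / B b s) →
      Function.Surjective A → Function.Injective B := by
    intro A B hAB hBsub hA a b hab
    have h0 : ∀ s, B (a - b) s = 1 := by
      intro s
      rw [hBsub, hab, div_self']
    have : a - b = 0 := by
      apply aux_sep (a := a - b)
      intro ψ
      obtain ⟨r, hr⟩ := hA ψ
      rw [← hr, hAB]
      exact h0 r
    exact sub_eq_zero.mp this
  -- bijectivity from injectivity plus an existing bijection
  have bij_of_inj : ∀ B : R → AddChar R ℂˣ, Function.Bijective Φ ∨ Function.Bijective Ψ →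
      Function.Injective B → Function.Bijective B := by
    rintro B hb hBi
    have hE : ∃ E : R ≃ AddChar R ℂˣ, True := by
      rcases hb with hb | hb
      exacts [⟨Equiv.ofBijective Φ hb, trivial⟩, ⟨Equiv.ofBijective Ψ hb, trivial⟩]
    obtain ⟨E, -⟩ := hE
    have : Function.Bijective (E.symm ∘ B) :=
      Finite.injective_iff_bijective.mp (E.symm.injective.comp hBi)
    have h2 : (⇑E ∘ (⇑E.symm ∘ B)) = B := by ext x : 1; simp
    exact h2 ▸ E.bijective.comp this
  rcases h with hb | hb
  · exact main hb (bij_of_inj Ψ (Or.inl hb) (inj_of_surj Φ Ψ (fun r s => rfl) hΨsub hb.2))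
  · exact main (bij_of_inj Φ (Or.inr hb) (inj_of_surj Ψ Φ (fun r s => rfl) hΦsub hb.2)) hb
end
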